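/- arXiv:1603.07969 — 2 statements merged into one kernel-verified Lean document; each statement's English description precedes it below -/
import Mathlib

section
/- Let θ: ℝ → ℂ have integrable Fourier transform and let ρ be a symmetric nonnegative trace-class operator on L²(ℝ). Then Tr(X θ[ρ] X) = θ(0) · Tr(XρX), where θ[ρ] := (2π)^{-1/2} ∫ e^{ikX} ρ e^{-ikX} θ̂(k) dk. -/
open MeasureTheory Complex

/-- Let `θf : ℝ → ℂ` have integrable Fourier transform `θhat` (Fourier inversion
`θf X = (2π)^{-1/2} ∫ θhat(k) e^{ikX} dk` holds), and let `ρ = ∑ⱼ λⱼ |ψⱼ⟩⟨ψⱼ|` be a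
symmetric nonnegative trace-class operator on `L²(ℝ)`.  With
`Tr(X ρ X) = ∑ⱼ λⱼ ∫ x²|ψⱼ(x)|² dx` and
`Tr(X θ[ρ] X) = (2π)^{-1/2} ∫ θhat(k) ∑ⱼ λⱼ ∫ x² |e^{ikx}ψⱼ(x)|² dx dk`
(coming from `θ[ρ] = (2π)^{-1/2} ∫ e^{ikX} ρ e^{-ikX} θhat(k) dk`), one has
`Tr(X θ[ρ] X) = θf(0) · Tr(X ρ X)`. -/
theorem trace_X_theta_rho_X (θf θhat : ℝ → ℂ) (hθhat : Integrable θhat)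
    (hinv : ∀ X : ℝ, θf X =
      ((Real.sqrt (2 * Real.pi) : ℝ) : ℂ)⁻¹ *
        ∫ k : ℝ, θhat k * Complex.exp (Complex.I * k * X))
    (lam : ℕ → ℝ) (hlam : ∀ j, 0 ≤ lam j) (ψ : ℕ → ℝ → ℂ)
    (hmeas : ∀ j, AEStronglyMeasurable (ψ j) volume)
    (horth : ∀ j l, (∫ x : ℝ, (starRingEnd ℂ) (ψ j x) * ψ l x) = if j = l then 1 else 0)
    (TrX : ℝ) (hTrX : HasSum (fun j => lam j * ∫ x : ℝ, x ^ 2 * ‖ψ j x‖ ^ 2) TrX)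
    (TrThetaX : ℂ)
    (hTrThetaX : TrThetaX = ((Real.sqrt (2 * Real.pi) : ℝ) : ℂ)⁻¹ *
      ∫ k : ℝ, θhat k * ∑' j, (lam j : ℂ) *
        ∫ x : ℝ, (x : ℂ) ^ 2 * ((Complex.exp (Complex.I * k * x) * ψ j x) *
          (starRingEnd ℂ) (Complex.exp (Complex.I * k * x) * ψ j x))) :
    TrThetaX = θf 0 * TrX := by
  have hinner : ∀ (k : ℝ) (j : ℕ),
      (∫ x : ℝ, (x : ℂ) ^ 2 * ((Complex.exp (Complex.I * k * x) * ψ j x) *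
          (starRingEnd ℂ) (Complex.exp (Complex.I * k * x) * ψ j x)))
      = ((∫ x : ℝ, x ^ 2 * ‖ψ j x‖ ^ 2 : ℝ) : ℂ) := by
    intro k j
    rw [show ((∫ x : ℝ, x ^ 2 * ‖ψ j x‖ ^ 2 : ℝ) : ℂ)
        = ∫ x : ℝ, ((x ^ 2 * ‖ψ j x‖ ^ 2 : ℝ) : ℂ) from integral_ofReal.symm]
    congr 1
    funext x
    have h1 : (Complex.exp (Complex.I * k * x) * ψ j x) *
        (starRingEnd ℂ) (Complex.exp (Complex.I * k * x) * ψ j x)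
        = ((‖Complex.exp (Complex.I * k * x) * ψ j x‖ ^ 2 : ℝ) : ℂ) := by
      rw [Complex.mul_conj, Complex.normSq_eq_norm_sq]
    rw [h1]
    have h2 : ‖Complex.exp (Complex.I * k * x) * ψ j x‖ = ‖ψ j x‖ := by
      rw [norm_mul]
      have : Complex.I * k * x = (k * x : ℝ) * Complex.I := by push_cast; ring
      rw [this, Complex.norm_exp_ofReal_mul_I, one_mul]
    rw [h2]
    push_cast
    ring
  have hsum : ∀ k : ℝ, (∑' j, (lam j : ℂ) *
      ∫ x : ℝ, (x : ℂ) ^ 2 * ((Complex.exp (Complex.I * k * x) * ψ j x) *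
        (starRingEnd ℂ) (Complex.exp (Complex.I * k * x) * ψ j x))) = (TrX : ℂ) := by
    intro k
    have := (hTrX.mapL Complex.ofRealCLM)
    have h' : HasSum (fun j => (lam j : ℂ) *
        ∫ x : ℝ, (x : ℂ) ^ 2 * ((Complex.exp (Complex.I * k * x) * ψ j x) *
          (starRingEnd ℂ) (Complex.exp (Complex.I * k * x) * ψ j x))) (TrX : ℂ) := by
      convert this using 2 with j
      rw [hinner k j]
      simp
      rfl
    exact h'.tsum_eq
  rw [hTrThetaX, hinv 0]
  simp only [hsum]
  rw [show (∫ k : ℝ, θhat k * (TrX : ℂ)) = (∫ k : ℝ, θhat k) * (TrX : ℂ) from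
    integral_mul_const _ _]
  have : ∀ k : ℝ, θhat k * Complex.exp (Complex.I * k * (0:ℝ)) = θhat k := by
    intro k; simp
  simp only [this]
  ring
end

section
/- Let θ: ℝ → ℂ be such that (1+k²)θ̂(k) is integrable, and let ρ be a symmetric nonnegative trace-class operator on L²(ℝ) with finite kinetic energy Tr((i∇)ρ(i∇)) < ∞. Then Tr((i∇) θ[ρ] (i∇)) = θ(0)·Tr((i∇)ρ(i∇)) + i·θ'(0)·Tr((i∇)ρ + ρ(i∇)) − θ''(0)·Tr ρ. -/
open MeasureTheory Complex
open scoped ENNReal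

lemma memLp_conj {f : ℝ → ℂ} (hf : MemLp f 2 volume) :
    MemLp (fun x => (starRingEnd ℂ) (f x)) 2 volume := by
  refine ⟨Complex.continuous_conj.comp_aestronglyMeasurable hf.1, ?_⟩
  have h : eLpNorm (starRingEnd ℂ ∘ f) 2 (volume : Measure ℝ) = eLpNorm f 2 volume :=
    eLpNorm_conj f 2 volume
  have he : (starRingEnd ℂ ∘ f) = fun x => (starRingEnd ℂ) (f x) := rfl
  rw [he] at h
  rw [h]; exact hf.2

lemma int_mul {f g : ℝ → ℂ} (hf : MemLp f 2 volume) (hg : MemLp g 2 volume) :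
    Integrable (fun x => f x * g x) := by
  have h : MemLp (f • g) 1 volume := hg.smul (p := 2) (q := 2) hf
  rw [memLp_one_iff_integrable] at h
  exact h

lemma aux_deriv (w : ℝ → ℂ) (hw : Integrable w)
    (hkw : Integrable (fun k : ℝ => (k:ℂ) * w k)) (X₀ : ℝ) :
    HasDerivAt (fun X : ℝ => ∫ k : ℝ, w k * Complex.exp (Complex.I * k * X))
      (∫ k : ℝ, Complex.I * k * w k * Complex.exp (Complex.I * k * X₀)) X₀ := by
  have hexp : ∀ (k X : ℝ), ‖Complex.exp (Complex.I * k * X)‖ = 1 := by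
    intro k X
    rw [Complex.norm_exp]
    simp [Complex.mul_re]
  have hmeas : ∀ X : ℝ, AEStronglyMeasurable
      (fun k : ℝ => w k * Complex.exp (Complex.I * k * X)) volume := by
    intro X
    exact hw.aestronglyMeasurable.mul
      ((Complex.continuous_exp.comp (by continuity)).aestronglyMeasurable)
  have h := hasDerivAt_integral_of_dominated_loc_of_deriv_le (μ := volume)
      (F := fun (X : ℝ) (k : ℝ) => w k * Complex.exp (Complex.I * k * X))
      (F' := fun (X : ℝ) (k : ℝ) => Complex.I * k * w k * Complex.exp (Complex.I * k * X))
      (x₀ := X₀) (bound := fun k : ℝ => ‖(k:ℂ) * w k‖) (Metric.ball_mem_nhds X₀ one_pos)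
      (Filter.Eventually.of_forall hmeas)
      (hw.norm.mono' (hmeas X₀) (Filter.Eventually.of_forall fun k => by
        rw [norm_mul, hexp, mul_one]))
      (((continuous_const.mul Complex.continuous_ofReal).aestronglyMeasurable (μ := volume).mul
          hw.aestronglyMeasurable).mul
        ((Complex.continuous_exp.comp (by continuity)).aestronglyMeasurable))
      (Filter.Eventually.of_forall fun k => by
        intro X _
        rw [norm_mul, hexp, mul_one, norm_mul, norm_mul]
        simp
        )
      hkw.norm
      (Filter.Eventually.of_forall fun k => by
        intro X _
        have h0 : HasDerivAt (fun X : ℝ => (X : ℂ)) 1 X := by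
          simpa using (hasDerivAt_id X).ofReal_comp
        have h1 : HasDerivAt (fun X : ℝ => Complex.I * k * (X:ℂ)) (Complex.I * k) X := by
          simpa using h0.const_mul (Complex.I * k)
        have h2 := h1.cexp
        have h3 := h2.const_mul (w k)
        exact h3.congr_deriv (by ring))
  exact h.2

lemma ibp {ψ : ℝ → ℂ} (hdiff : Differentiable ℝ ψ) (hψ : MemLp ψ 2 volume)
    (hdψ : MemLp (deriv ψ) 2 volume) :
    (∫ x : ℝ, (starRingEnd ℂ) (ψ x) * deriv ψ x)
      = - ∫ x : ℝ, (starRingEnd ℂ) (deriv ψ x) * ψ x := by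
  have hu : ∀ x : ℝ, HasDerivAt (fun y => (starRingEnd ℂ) (ψ y))
      ((starRingEnd ℂ) (deriv ψ x)) x := by
    intro x
    have h1 : HasDerivAt ψ (deriv ψ x) x := (hdiff x).hasDerivAt
    have h2 := (Complex.conjCLE.hasFDerivAt (x := ψ x)).comp_hasDerivAt x h1
    exact h1.star
  have hv : ∀ x : ℝ, HasDerivAt ψ (deriv ψ x) x := fun x => (hdiff x).hasDerivAt
  have h := integral_mul_deriv_eq_deriv_mul_of_integrable (fun x _ => hu x) (fun x _ => hv x)
    (by simpa [Pi.mul_def] using int_mul (memLp_conj hψ) hdψ)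
    (by simpa [Pi.mul_def] using int_mul (memLp_conj hdψ) hψ)
    (by simpa [Pi.mul_def] using int_mul (memLp_conj hψ) hψ)
  exact h

lemma expand_int {ψ : ℝ → ℂ} (hdiff : Differentiable ℝ ψ) (hψ : MemLp ψ 2 volume)
    (hdψ : MemLp (deriv ψ) 2 volume)
    (hnorm : (∫ x : ℝ, (starRingEnd ℂ) (ψ x) * ψ x) = 1) (k : ℝ) :
    (∫ x : ℝ, (Complex.I * deriv ψ x - (k : ℂ) * ψ x) *
        (starRingEnd ℂ) (Complex.I * deriv ψ x - (k : ℂ) * ψ x))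
      = ((∫ x : ℝ, ‖deriv ψ x‖ ^ 2 : ℝ) : ℂ) + (k:ℂ)^2
        - 2 * k * ∫ x : ℝ, (starRingEnd ℂ) (ψ x) * (Complex.I * deriv ψ x) := by
  have hA : MemLp (fun x => Complex.I * deriv ψ x) 2 volume := hdψ.const_mul _
  have e1 : Integrable (fun x => (Complex.I * deriv ψ x) *
      (starRingEnd ℂ) (Complex.I * deriv ψ x)) := int_mul hA (memLp_conj hA)
  have e2 : Integrable (fun x => ψ x * (starRingEnd ℂ) (ψ x)) :=
    int_mul hψ (memLp_conj hψ)
  have e3 : Integrable (fun x => (Complex.I * deriv ψ x) * (starRingEnd ℂ) (ψ x)) :=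
    int_mul hA (memLp_conj hψ)
  have e4 : Integrable (fun x => ψ x * (starRingEnd ℂ) (Complex.I * deriv ψ x)) :=
    int_mul hψ (memLp_conj hA)
  have hexpand : (fun x => (Complex.I * deriv ψ x - (k : ℂ) * ψ x) *
      (starRingEnd ℂ) (Complex.I * deriv ψ x - (k : ℂ) * ψ x))
      = fun x => ((Complex.I * deriv ψ x) * (starRingEnd ℂ) (Complex.I * deriv ψ x)
          + (k:ℂ)^2 * (ψ x * (starRingEnd ℂ) (ψ x)))
          - (k:ℂ) * ((Complex.I * deriv ψ x) * (starRingEnd ℂ) (ψ x))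
          - (k:ℂ) * (ψ x * (starRingEnd ℂ) (Complex.I * deriv ψ x)) := by
    funext x
    simp only [map_sub, map_mul, Complex.conj_ofReal]
    ring
  have i2' : Integrable (fun x => (k:ℂ)^2 * (ψ x * (starRingEnd ℂ) (ψ x))) :=
    e2.const_mul _
  have i3' : Integrable (fun x => (k:ℂ) * ((Complex.I * deriv ψ x) * (starRingEnd ℂ) (ψ x))) :=
    e3.const_mul _
  have i4' : Integrable (fun x => (k:ℂ) * (ψ x * (starRingEnd ℂ) (Complex.I * deriv ψ x))) :=
    e4.const_mul _
  have iA : Integrable (fun x => (Complex.I * deriv ψ x) * (starRingEnd ℂ) (Complex.I * deriv ψ x)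
      + (k:ℂ)^2 * (ψ x * (starRingEnd ℂ) (ψ x))) := by exact e1.add i2'
  have iAB : Integrable (fun x => ((Complex.I * deriv ψ x) * (starRingEnd ℂ) (Complex.I * deriv ψ x)
      + (k:ℂ)^2 * (ψ x * (starRingEnd ℂ) (ψ x)))
      - (k:ℂ) * ((Complex.I * deriv ψ x) * (starRingEnd ℂ) (ψ x))) := by exact iA.sub i3'
  rw [hexpand]
  rw [integral_sub iAB i4', integral_sub iA i3', integral_add e1 i2',
    integral_const_mul, integral_const_mul, integral_const_mul]
  have h1 : (∫ x : ℝ, (Complex.I * deriv ψ x) * (starRingEnd ℂ) (Complex.I * deriv ψ x))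
      = ((∫ x : ℝ, ‖deriv ψ x‖ ^ 2 : ℝ) : ℂ) := by
    have hpt : (fun x => (Complex.I * deriv ψ x) * (starRingEnd ℂ) (Complex.I * deriv ψ x))
        = fun x => ((‖deriv ψ x‖ ^ 2 : ℝ) : ℂ) := by
      funext x
      rw [Complex.mul_conj]
      norm_cast
      simp [Complex.normSq_mul, Complex.normSq_eq_norm_sq,
        Complex.norm_I]
    rw [hpt]
    exact integral_ofReal
  have h2 : (∫ x : ℝ, ψ x * (starRingEnd ℂ) (ψ x)) = 1 := by
    rw [← hnorm]; congr 1; funext x; ring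
  have h3 : (∫ x : ℝ, (Complex.I * deriv ψ x) * (starRingEnd ℂ) (ψ x))
      = ∫ x : ℝ, (starRingEnd ℂ) (ψ x) * (Complex.I * deriv ψ x) := by
    congr 1; funext x; ring
  have h4 : (∫ x : ℝ, ψ x * (starRingEnd ℂ) (Complex.I * deriv ψ x))
      = ∫ x : ℝ, (starRingEnd ℂ) (ψ x) * (Complex.I * deriv ψ x) := by
    have hibp := ibp hdiff hψ hdψ
    have hpt : (fun x => ψ x * (starRingEnd ℂ) (Complex.I * deriv ψ x))
        = fun x => (-Complex.I) * ((starRingEnd ℂ) (deriv ψ x) * ψ x) := by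
      funext x; simp only [map_mul, Complex.conj_I]; ring
    have hpt2 : (fun x => (starRingEnd ℂ) (ψ x) * (Complex.I * deriv ψ x))
        = fun x => Complex.I * ((starRingEnd ℂ) (ψ x) * deriv ψ x) := by
      funext x; ring
    rw [hpt, hpt2, integral_const_mul, integral_const_mul, hibp]
    ring
  rw [h1, h2, h3, h4]
  ring

/-- Let `θf : ℝ → ℂ` be such that `(1+k²) θhat(k)` is integrable (`θhat` being its
Fourier transform, with the inversion formula holding), and let
`ρ = ∑ⱼ λⱼ |ψⱼ⟩⟨ψⱼ|` be a symmetric nonnegative trace-class operator on `L²(ℝ)`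
with finite kinetic energy `Tr((i∇)ρ(i∇)) = ∑ⱼ λⱼ ‖ψⱼ'‖₂² < ∞`.  Using
`(i∇)e^{ikX} = e^{ikX}((i∇) − k)`, the trace
`Tr((i∇) θ[ρ] (i∇)) = (2π)^{-1/2} ∫ θhat(k) ∑ⱼ λⱼ ‖(i∇ − k)ψⱼ‖₂² dk` satisfies
`Tr((i∇) θ[ρ] (i∇)) = θf(0) Tr((i∇)ρ(i∇)) + i θf'(0) Tr((i∇)ρ + ρ(i∇)) − θf''(0) Tr ρ`. -/
theorem trace_grad_theta_rho_grad (θf θhat : ℝ → ℂ)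
    (hθhat : Integrable fun k => ((1 + k ^ 2 : ℝ) : ℂ) * θhat k)
    (hinv : ∀ X : ℝ, θf X =
      ((Real.sqrt (2 * Real.pi) : ℝ) : ℂ)⁻¹ *
        ∫ k : ℝ, θhat k * Complex.exp (Complex.I * k * X))
    (lam : ℕ → ℝ) (hlam : ∀ j, 0 ≤ lam j) (ψ : ℕ → ℝ → ℂ)
    (hdiff : ∀ j, Differentiable ℝ (ψ j))
    (hψ : ∀ j, MemLp (ψ j) 2 volume) (hdψ : ∀ j, MemLp (deriv (ψ j)) 2 volume)
    (horth : ∀ j l, (∫ x : ℝ, (starRingEnd ℂ) (ψ j x) * ψ l x) = if j = l then 1 else 0)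
    (Trρ : ℝ) (hTrρ : HasSum lam Trρ)
    (Ekin : ℝ) (hEkin : HasSum (fun j => lam j * ∫ x : ℝ, ‖deriv (ψ j) x‖ ^ 2) Ekin)
    (Tmix : ℂ) (hTmix : HasSum (fun j => ((2 * lam j : ℝ) : ℂ) *
      ∫ x : ℝ, (starRingEnd ℂ) (ψ j x) * (Complex.I * deriv (ψ j) x)) Tmix)
    (TrThetaKin : ℂ)
    (hTrThetaKin : TrThetaKin = ((Real.sqrt (2 * Real.pi) : ℝ) : ℂ)⁻¹ *
      ∫ k : ℝ, θhat k * ∑' j, (lam j : ℂ) *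
        ∫ x : ℝ, (Complex.I * deriv (ψ j) x - (k : ℂ) * ψ j x) *
          (starRingEnd ℂ) (Complex.I * deriv (ψ j) x - (k : ℂ) * ψ j x)) :
    TrThetaKin = θf 0 * Ekin + Complex.I * deriv θf 0 * Tmix
      - deriv (deriv θf) 0 * Trρ := by
  set c : ℂ := ((Real.sqrt (2 * Real.pi) : ℝ) : ℂ)⁻¹ with hc
  -- measurability and integrability of θhat, k θhat, k² θhat
  have hmeasθ : AEStronglyMeasurable θhat volume := by
    have h1 := hθhat.aestronglyMeasurable
    have h2 : Continuous fun k : ℝ => (((1 + k^2 : ℝ) : ℂ))⁻¹ := by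
      apply Continuous.inv₀
      · fun_prop
      · intro k
        exact Complex.ofReal_ne_zero.mpr (by positivity)
    have heq : θhat = fun k => (((1 + k^2 : ℝ) : ℂ))⁻¹ * (((1 + k^2 : ℝ) : ℂ) * θhat k) := by
      funext k
      rw [← mul_assoc, inv_mul_cancel₀ (Complex.ofReal_ne_zero.mpr (by positivity)), one_mul]
    rw [heq]
    exact h2.aestronglyMeasurable.mul h1
  have hbnd : ∀ k : ℝ, ‖((1 + k^2 : ℝ) : ℂ) * θhat k‖ = (1 + k^2) * ‖θhat k‖ := by
    intro k
    rw [norm_mul, Complex.norm_real, Real.norm_eq_abs, abs_of_pos (by positivity)]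
  have hint0 : Integrable θhat := by
    refine hθhat.norm.mono' hmeasθ (Filter.Eventually.of_forall fun k => ?_)
    rw [hbnd]
    nlinarith [norm_nonneg (θhat k), sq_nonneg k]
  have hint1 : Integrable (fun k : ℝ => (k:ℂ) * θhat k) := by
    refine hθhat.norm.mono' (Complex.continuous_ofReal.aestronglyMeasurable.mul hmeasθ)
      (Filter.Eventually.of_forall fun k => ?_)
    rw [hbnd, norm_mul, Complex.norm_real, Real.norm_eq_abs]
    have h1 : |k| ≤ 1 + k^2 := by nlinarith [abs_nonneg k, _root_.sq_abs k]
    exact mul_le_mul_of_nonneg_right h1 (norm_nonneg _)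
  have hint2 : Integrable (fun k : ℝ => (k:ℂ)^2 * θhat k) := by
    refine hθhat.norm.mono'
      (((Complex.continuous_ofReal.pow 2).aestronglyMeasurable).mul hmeasθ)
      (Filter.Eventually.of_forall fun k => ?_)
    rw [hbnd, norm_mul, norm_pow, Complex.norm_real, Real.norm_eq_abs]
    have h1 : |k|^2 ≤ 1 + k^2 := by nlinarith [_root_.sq_abs k]
    exact mul_le_mul_of_nonneg_right h1 (norm_nonneg _)
  -- derivatives of θf
  have hfun : θf = fun X : ℝ => c * ∫ k : ℝ, θhat k * Complex.exp (Complex.I * k * X) :=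
    funext hinv
  have hD1 : ∀ X : ℝ, HasDerivAt θf
      (c * ∫ k : ℝ, Complex.I * k * θhat k * Complex.exp (Complex.I * k * X)) X := by
    intro X
    rw [hfun]
    exact (aux_deriv θhat hint0 hint1 X).const_mul c
  have hd1 : deriv θf
      = fun X : ℝ => c * ∫ k : ℝ, Complex.I * k * θhat k * Complex.exp (Complex.I * k * X) :=
    funext fun X => (hD1 X).deriv
  have hint1' : Integrable (fun k : ℝ => Complex.I * k * θhat k) := by
    have h := hint1.const_mul Complex.I
    have heq : (fun k : ℝ => Complex.I * ((k:ℂ) * θhat k))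
        = fun k : ℝ => Complex.I * k * θhat k := by
      funext k; ring
    rwa [heq] at h
  have hint2' : Integrable (fun k : ℝ => (k:ℂ) * (Complex.I * k * θhat k)) := by
    have h := hint2.const_mul Complex.I
    have heq : (fun k : ℝ => Complex.I * ((k:ℂ)^2 * θhat k))
        = fun k : ℝ => (k:ℂ) * (Complex.I * k * θhat k) := by
      funext k; ring
    rwa [heq] at h
  have hD2 : HasDerivAt (deriv θf)
      (c * ∫ k : ℝ, Complex.I * k * (Complex.I * k * θhat k)
        * Complex.exp (Complex.I * k * (0:ℝ))) 0 := by
    rw [hd1]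
    exact (aux_deriv _ hint1' hint2' 0).const_mul c
  -- values at 0
  have hv0 : θf 0 = c * ∫ k : ℝ, θhat k := by
    rw [hinv 0]
    simp only [Complex.ofReal_zero, mul_zero, Complex.exp_zero, mul_one]
  have hv1 : deriv θf 0 = c * (Complex.I * ∫ k : ℝ, (k:ℂ) * θhat k) := by
    rw [hd1]
    simp only [Complex.ofReal_zero, mul_zero, Complex.exp_zero, mul_one]
    have heq : (fun k : ℝ => Complex.I * k * θhat k)
        = fun k : ℝ => Complex.I * ((k:ℂ) * θhat k) := by
      funext k; ring
    rw [heq, integral_const_mul]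
  have hv2 : deriv (deriv θf) 0
      = c * ((Complex.I * Complex.I) * ∫ k : ℝ, (k:ℂ)^2 * θhat k) := by
    rw [hD2.deriv]
    simp only [Complex.ofReal_zero, mul_zero, Complex.exp_zero, mul_one]
    have heq : (fun k : ℝ => Complex.I * k * (Complex.I * k * θhat k))
        = fun k : ℝ => (Complex.I * Complex.I) * ((k:ℂ)^2 * θhat k) := by
      funext k; ring
    rw [heq, integral_const_mul]
  -- evaluation of the inner sum
  have hsum : ∀ k : ℝ, (∑' j, (lam j : ℂ) *
      ∫ x : ℝ, (Complex.I * deriv (ψ j) x - (k : ℂ) * ψ j x) *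
        (starRingEnd ℂ) (Complex.I * deriv (ψ j) x - (k : ℂ) * ψ j x))
      = (Ekin : ℂ) + (k:ℂ)^2 * (Trρ : ℂ) - (k:ℂ) * Tmix := by
    intro k
    have h1 : HasSum (fun j => ((lam j * ∫ x : ℝ, ‖deriv (ψ j) x‖ ^ 2 : ℝ) : ℂ)) (Ekin : ℂ) :=
      Complex.hasSum_ofReal.2 hEkin
    have h2 : HasSum (fun j => ((lam j : ℝ) : ℂ)) ((Trρ : ℝ) : ℂ) :=
      Complex.hasSum_ofReal.2 hTrρ
    have hcombo := (h1.add (h2.mul_left ((k:ℂ)^2))).sub (hTmix.mul_left (k:ℂ))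
    have heq : (fun j => (lam j : ℂ) *
        ∫ x : ℝ, (Complex.I * deriv (ψ j) x - (k : ℂ) * ψ j x) *
          (starRingEnd ℂ) (Complex.I * deriv (ψ j) x - (k : ℂ) * ψ j x))
        = fun j => ((lam j * ∫ x : ℝ, ‖deriv (ψ j) x‖ ^ 2 : ℝ) : ℂ)
            + (k:ℂ)^2 * ((lam j : ℝ) : ℂ)
            - (k:ℂ) * (((2 * lam j : ℝ) : ℂ) *
              ∫ x : ℝ, (starRingEnd ℂ) (ψ j x) * (Complex.I * deriv (ψ j) x)) := by
      funext j
      rw [expand_int (hdiff j) (hψ j) (hdψ j) (by simpa using horth j j) k]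
      push_cast
      ring
    rw [heq]
    exact hcombo.tsum_eq
  -- put everything together
  rw [hTrThetaKin]
  have hpt : (fun k : ℝ => θhat k * ∑' j, (lam j : ℂ) *
      ∫ x : ℝ, (Complex.I * deriv (ψ j) x - (k : ℂ) * ψ j x) *
        (starRingEnd ℂ) (Complex.I * deriv (ψ j) x - (k : ℂ) * ψ j x))
      = fun k : ℝ => (Ekin : ℂ) * θhat k + (Trρ : ℂ) * ((k:ℂ)^2 * θhat k)
          - Tmix * ((k:ℂ) * θhat k) := by
    funext k
    rw [hsum k]
    ring
  rw [hpt]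
  have jE : Integrable (fun k : ℝ => (Ekin : ℂ) * θhat k) := hint0.const_mul _
  have jT : Integrable (fun k : ℝ => (Trρ : ℂ) * ((k:ℂ)^2 * θhat k)) := hint2.const_mul _
  have jM : Integrable (fun k : ℝ => Tmix * ((k:ℂ) * θhat k)) := hint1.const_mul _
  have jA : Integrable (fun k : ℝ => (Ekin : ℂ) * θhat k
      + (Trρ : ℂ) * ((k:ℂ)^2 * θhat k)) := by exact jE.add jT
  rw [integral_sub jA jM, integral_add jE jT, integral_const_mul, integral_const_mul,
    integral_const_mul, hv0, hv1, hv2]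
  linear_combination (c * (Trρ : ℂ) * (∫ k : ℝ, (k:ℂ)^2 * θhat k)
    - c * Tmix * (∫ k : ℝ, (k:ℂ) * θhat k)) * Complex.I_mul_I
end
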